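/- Let S be an n-element subset of the rows of A whose rows are linearly independent, with v_S² := det(A_S A_Sᵀ), and let V > 0 satisfy v_S² ≤ V. Let P_S := A_Sᵀ (A_S A_Sᵀ)⁻¹ A_S be the orthogonal projector onto the row span of A_S, Q_S := A_Sᵀ · adj(A_S A_Sᵀ) · A_S, and set μ := 1 − √(1 − v_S²/V) (or μ := 1 + √(1 − v_S²/V)). Then for every e ∈ ℝ^N, the relaxed update satisfies ‖e − μ P_S e‖² = ‖e‖² − (1/V) · eᵀ Q_S e. -/

import Mathlib

open Matrix BigOperators Finset

/-- The submatrix of `A` formed by the rows indexed by the subset `S`. -/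
def subMat {M N : ℕ} (A : Matrix (Fin M) (Fin N) ℝ) (S : Finset (Fin M)) :
    Matrix {i // i ∈ S} (Fin N) ℝ :=
  A.submatrix (fun i => (i : Fin M)) id

/-- The squared volume `v_S² = det (A_S A_Sᵀ)` of the parallelepiped spanned by
the rows of `A` indexed by `S`. -/
noncomputable def volSq {M N : ℕ} (A : Matrix (Fin M) (Fin N) ℝ) (S : Finset (Fin M)) : ℝ :=
  (subMat A S * (subMat A S)ᵀ).det

/-- The quasi projector `Q_S = A_Sᵀ · adj(A_S A_Sᵀ) · A_S`. -/
noncomputable def quasiProj {M N : ℕ} (A : Matrix (Fin M) (Fin N) ℝ) (S : Finset (Fin M)) :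
    Matrix (Fin N) (Fin N) ℝ :=
  (subMat A S)ᵀ * (subMat A S * (subMat A S)ᵀ).adjugate * subMat A S

/-- The total quasi projector `Φ_n = Σ_{|S| = n} Q_S`. -/
noncomputable def totalQuasiProj {M N : ℕ} (A : Matrix (Fin M) (Fin N) ℝ) (n : ℕ) :
    Matrix (Fin N) (Fin N) ℝ :=
  ∑ S ∈ Finset.univ.powersetCard n, quasiProj A S

/-- The sum of squared `n`-volumes `vol_n = Σ_{|S| = n} v_S²` (with `vol_0 = 1`). -/
noncomputable def vol {M N : ℕ} (A : Matrix (Fin M) (Fin N) ℝ) (n : ℕ) : ℝ :=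
  ∑ S ∈ Finset.univ.powersetCard n, volSq A S

/-- Squared Euclidean norm of a vector in `ℝ^N`. -/
def normSq {N : ℕ} (x : Fin N → ℝ) : ℝ := ∑ i, x i ^ 2

/-- The rejection operator `R_S = I − Q_S / v_S²` when `v_S² ≠ 0`
(equal to `I − P_S` for linearly independent rows), and `R_S = I` otherwise. -/
noncomputable def rej {M N : ℕ} (A : Matrix (Fin M) (Fin N) ℝ) (S : Finset (Fin M)) :
    Matrix (Fin N) (Fin N) ℝ :=
  if volSq A S = 0 then 1 else 1 - (volSq A S)⁻¹ • quasiProj A S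

/-- Relaxed update identity: for an `n`-element subset `S` with linearly independent
rows, squared volume `v_S² ≤ V` (`V > 0`), orthogonal projector
`P_S = A_Sᵀ (A_S A_Sᵀ)⁻¹ A_S`, and relaxation `μ = 1 ± √(1 − v_S²/V)`, one has
`‖e − μ P_S e‖² = ‖e‖² − (1/V) eᵀ Q_S e`. -/
theorem relaxed_update_identity {M N n : ℕ} (A : Matrix (Fin M) (Fin N) ℝ)
    (S : Finset (Fin M)) (hS : S.card = n)
    (hind : LinearIndependent ℝ (fun i : {i // i ∈ S} => A (i : Fin M)))
    (V : ℝ) (hV : 0 < V) (hle : volSq A S ≤ V) (μ : ℝ)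
    (hμ : μ = 1 - Real.sqrt (1 - volSq A S / V) ∨
          μ = 1 + Real.sqrt (1 - volSq A S / V))
    (e : Fin N → ℝ) :
    normSq (e - μ • (((subMat A S)ᵀ * (subMat A S * (subMat A S)ᵀ)⁻¹ * subMat A S) *ᵥ e)) =
      normSq e - (1 / V) * (e ⬝ᵥ (quasiProj A S *ᵥ e)) := by
  set B := subMat A S with hB
  set G := B * Bᵀ with hG
  have hdet : G.det ≠ 0 := by
    intro h
    obtain ⟨x, hx0, hxv⟩ := (Matrix.exists_mulVec_eq_zero_iff).mpr h
    have hw : Bᵀ *ᵥ x = 0 := by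
      have h1 : x ⬝ᵥ (G *ᵥ x) = (Bᵀ *ᵥ x) ⬝ᵥ (Bᵀ *ᵥ x) := by
        rw [hG, ← Matrix.mulVec_mulVec, Matrix.dotProduct_mulVec, Matrix.mulVec_transpose]
      rw [hxv, dotProduct_zero] at h1
      exact (dotProduct_self_eq_zero).mp h1.symm
    apply hx0
    have hz := Fintype.linearIndependent_iff.mp hind x ?_
    · funext i; exact hz i
    · funext j
      have hj := congrFun hw j
      simpa [Matrix.mulVec, dotProduct, hB, subMat, Matrix.transpose_apply,
        mul_comm, Finset.sum_apply] using hj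
  have hdu : IsUnit G.det := isUnit_iff_ne_zero.mpr hdet
  have hGt : Gᵀ = G := by rw [hG, Matrix.transpose_mul, Matrix.transpose_transpose]
  have hGinvt : G⁻¹ᵀ = G⁻¹ := by rw [Matrix.transpose_nonsing_inv, hGt]
  set P := Bᵀ * G⁻¹ * B with hP
  have hPt : Pᵀ = P := by
    rw [hP, Matrix.transpose_mul, Matrix.transpose_mul, Matrix.transpose_transpose, hGinvt,
      Matrix.mul_assoc]
  have hPP : P * P = P := by
    rw [hP]
    simp only [Matrix.mul_assoc]
    rw [← Matrix.mul_assoc B Bᵀ, ← hG, ← Matrix.mul_assoc G⁻¹ G, Matrix.nonsing_inv_mul _ hdu,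
      Matrix.one_mul]
  have hadj : G.adjugate = G.det • G⁻¹ := by
    rw [Matrix.inv_def, smul_smul, Ring.inverse_eq_inv, mul_inv_cancel₀ hdet, one_smul]
  have hQ : quasiProj A S = G.det • P := by
    rw [quasiProj, ← hB, ← hG, hadj, hP, Matrix.mul_smul, Matrix.smul_mul]
  have hvol : volSq A S = G.det := rfl
  set p := P *ᵥ e with hp
  have hpp : p ⬝ᵥ p = e ⬝ᵥ p := by
    rw [hp, Matrix.dotProduct_mulVec, ← Matrix.mulVec_transpose, hPt, Matrix.mulVec_mulVec, hPP, dotProduct_comm (P *ᵥ e) e]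
  have hnormSq : ∀ x : Fin N → ℝ, normSq x = x ⬝ᵥ x := by
    intro x; simp [normSq, dotProduct, sq]
  have hnn : 0 ≤ 1 - volSq A S / V := by
    rw [sub_nonneg]; exact (div_le_one hV).mpr hle
  have hsq : (1 - μ) ^ 2 = 1 - volSq A S / V := by
    rcases hμ with h | h <;> subst h <;> linear_combination Real.sq_sqrt hnn
  have hcoef : 2 * μ - μ ^ 2 = volSq A S / V := by linear_combination -hsq
  rw [hnormSq, hnormSq, hQ, Matrix.smul_mulVec, dotProduct_smul]
  have hexp : (e - μ • p) ⬝ᵥ (e - μ • p) = e ⬝ᵥ e - (2 * μ - μ ^ 2) * (e ⬝ᵥ p) := by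
    simp only [dotProduct_sub, sub_dotProduct, smul_dotProduct,
      dotProduct_smul, smul_eq_mul, hpp, dotProduct_comm p e]
    ring
  rw [hexp, hcoef, smul_eq_mul, ← hvol]
  field_simp
  rfl
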